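/- Suppose 0 < ε ≤ 1/9 and 0 < θ ≤ 1/9, and X = (X_k, k ∈ ℤ) is a strictly stationary Markov chain satisfying Condition H(ε,θ). Then for every positive integer n, E(X_0·X_n) = Cov(X_0, X_n) = ε(1−θ)^n > 0. -/

import Mathlib

open MeasureTheory ProbabilityTheory Filter Topology

noncomputable section

/-- A sequence `X = (X_k, k ∈ ℤ)` of real random variables is strictly stationary if for
every `n ≥ 1` and `j ∈ ℤ`, `(X_1, …, X_n)` has the same distribution as
`(X_{1+j}, …, X_{n+j})`. -/
def IsStrictlyStationary {Ω : Type*} [MeasurableSpace Ω] (P : Measure Ω)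
    (X : ℤ → Ω → ℝ) : Prop :=
  ∀ (n : ℕ) (j : ℤ),
    Measure.map (fun ω => fun i : Fin n => X (1 + (i : ℤ)) ω) P =
    Measure.map (fun ω => fun i : Fin n => X (1 + j + (i : ℤ)) ω) P

/-- `X` is a Markov chain: for every `n ∈ ℤ` and Borel set `B`,
`P(X_{n+1} ∈ B | σ(X_k, k ≤ n)) = P(X_{n+1} ∈ B | X_n)` almost surely (expressed via
conditional expectations of indicator functions). -/
def IsMarkovChain {Ω : Type*} [MeasurableSpace Ω] (P : Measure Ω)
    (X : ℤ → Ω → ℝ) : Prop :=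
  ∀ (n : ℤ) (B : Set ℝ), MeasurableSet B →
    (P[(fun ω => Set.indicator B (fun _ => (1 : ℝ)) (X (n + 1) ω)) |
        ⨆ k : {k : ℤ // k ≤ n}, MeasurableSpace.comap (X k) inferInstance])
      =ᵐ[P]
    (P[(fun ω => Set.indicator B (fun _ => (1 : ℝ)) (X (n + 1) ω)) |
        MeasurableSpace.comap (X n) inferInstance])

/-- Condition `H(ε,θ)`: `X` is a strictly stationary Markov chain with state space
`{−1,0,1}`, marginal distribution `π^{(ε)}`, and one-step transition probabilities given
by the matrix `ℙ^{(ε,θ)}` (with `θ* := θ/(1−ε)`). Conditional probabilities are expressed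
via `ProbabilityTheory.cond`. -/
def CondH {Ω : Type*} [MeasurableSpace Ω] (P : Measure Ω) (X : ℤ → Ω → ℝ)
    (ε θ : ℝ) : Prop :=
  IsStrictlyStationary P X ∧ IsMarkovChain P X ∧
  (∀ k, Measurable (X k)) ∧
  (∀ k ω, X k ω ∈ ({-1, 0, 1} : Set ℝ)) ∧
  P {ω | X 0 ω = 0} = ENNReal.ofReal (1 - ε) ∧
  P {ω | X 0 ω = -1} = ENNReal.ofReal (ε / 2) ∧
  P {ω | X 0 ω = 1} = ENNReal.ofReal (ε / 2) ∧
  ProbabilityTheory.cond P {ω | X 0 ω = 0} {ω | X 1 ω = 0}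
      = ENNReal.ofReal (1 - (θ / (1 - ε)) * ε) ∧
  ProbabilityTheory.cond P {ω | X 0 ω = 0} {ω | X 1 ω = -1}
      = ENNReal.ofReal ((θ / (1 - ε)) * ε / 2) ∧
  ProbabilityTheory.cond P {ω | X 0 ω = 0} {ω | X 1 ω = 1}
      = ENNReal.ofReal ((θ / (1 - ε)) * ε / 2) ∧
  ProbabilityTheory.cond P {ω | X 0 ω = -1} {ω | X 1 ω = -1}
      = ENNReal.ofReal (1 - θ) ∧
  ProbabilityTheory.cond P {ω | X 0 ω = 1} {ω | X 1 ω = 1}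
      = ENNReal.ofReal (1 - θ) ∧
  ProbabilityTheory.cond P {ω | X 0 ω = -1} {ω | X 1 ω = 0}
      = ENNReal.ofReal θ ∧
  ProbabilityTheory.cond P {ω | X 0 ω = 1} {ω | X 1 ω = 0}
      = ENNReal.ofReal θ ∧
  ProbabilityTheory.cond P {ω | X 0 ω = -1} {ω | X 1 ω = 1} = 0 ∧
  ProbabilityTheory.cond P {ω | X 0 ω = 1} {ω | X 1 ω = -1} = 0

set_option linter.unusedSectionVars false
set_option linter.unusedVariables false
set_option maxHeartbeats 1000000

section AuxLemmas

variable {Ω : Type*} [mΩ : MeasurableSpace Ω] (P : Measure Ω) [IsProbabilityMeasure P]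

lemma aux_integrable {f : Ω → ℝ} (hfm : Measurable f)
    (hfS : ∀ ω, f ω ∈ ({-1, 0, 1} : Set ℝ)) : Integrable f P := by
  refine (integrable_const (1:ℝ)).mono' hfm.aestronglyMeasurable (ae_of_all _ fun ω => ?_)
  have h := hfS ω
  simp only [Set.mem_insert_iff, Set.mem_singleton_iff] at h
  rcases h with h | h | h <;> simp [h, Real.norm_eq_abs]

lemma aux_setIntegral {f : Ω → ℝ} (hfm : Measurable f)
    (hfS : ∀ ω, f ω ∈ ({-1, 0, 1} : Set ℝ)) {A : Set Ω} (hA : MeasurableSet A) :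
    ∫ ω in A, f ω ∂P
      = (P (A ∩ {ω | f ω = 1})).toReal - (P (A ∩ {ω | f ω = -1})).toReal := by
  have h1 : MeasurableSet {ω | f ω = 1} := hfm (measurableSet_singleton 1)
  have hm1 : MeasurableSet {ω | f ω = -1} := hfm (measurableSet_singleton (-1))
  have hdecomp : ∀ ω, f ω = Set.indicator {ω | f ω = 1} (fun _ => (1:ℝ)) ω
      - Set.indicator {ω | f ω = -1} (fun _ => (1:ℝ)) ω := by
    intro ω
    have h := hfS ω
    simp only [Set.mem_insert_iff, Set.mem_singleton_iff] at h
    rcases h with h | h | h <;> simp [Set.indicator_apply, h] <;> norm_num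
  have hi1 : Integrable (Set.indicator {ω | f ω = 1} (fun _ => (1:ℝ))) P :=
    (integrable_const (1:ℝ)).indicator h1
  have him : Integrable (Set.indicator {ω | f ω = -1} (fun _ => (1:ℝ))) P :=
    (integrable_const (1:ℝ)).indicator hm1
  calc ∫ ω in A, f ω ∂P
      = ∫ ω in A, (Set.indicator {ω | f ω = 1} (fun _ => (1:ℝ)) ω
          - Set.indicator {ω | f ω = -1} (fun _ => (1:ℝ)) ω) ∂P := by
        exact integral_congr_ae (ae_of_all _ fun ω => hdecomp ω)
    _ = (∫ ω in A, Set.indicator {ω | f ω = 1} (fun _ => (1:ℝ)) ω ∂P)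
          - ∫ ω in A, Set.indicator {ω | f ω = -1} (fun _ => (1:ℝ)) ω ∂P :=
        integral_sub hi1.integrableOn him.integrableOn
    _ = (P (A ∩ {ω | f ω = 1})).toReal - (P (A ∩ {ω | f ω = -1})).toReal := by
        rw [setIntegral_indicator h1, setIntegral_indicator hm1,
          setIntegral_const, setIntegral_const]
        simp
        rfl

lemma aux_partition {g : Ω → ℝ} (hgm : Measurable g)
    (hgS : ∀ ω, g ω ∈ ({-1, 0, 1} : Set ℝ)) {C : Set Ω} (hC : MeasurableSet C) :
    P C = P (C ∩ {ω | g ω = -1}) + P (C ∩ {ω | g ω = 0}) + P (C ∩ {ω | g ω = 1}) := by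
  have hm1 : MeasurableSet {ω | g ω = -1} := hgm (measurableSet_singleton _)
  have h0 : MeasurableSet {ω | g ω = 0} := hgm (measurableSet_singleton _)
  have h1 : MeasurableSet {ω | g ω = 1} := hgm (measurableSet_singleton _)
  have hunion : C = (C ∩ {ω | g ω = -1}) ∪ (C ∩ {ω | g ω = 0}) ∪ (C ∩ {ω | g ω = 1}) := by
    ext ω
    simp only [Set.mem_union, Set.mem_inter_iff, Set.mem_setOf_eq]
    constructor
    · intro h
      have hv := hgS ω
      simp only [Set.mem_insert_iff, Set.mem_singleton_iff] at hv
      rcases hv with hv | hv | hv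
      · exact Or.inl (Or.inl ⟨h, hv⟩)
      · exact Or.inl (Or.inr ⟨h, hv⟩)
      · exact Or.inr ⟨h, hv⟩
    · rintro ((⟨h, _⟩ | ⟨h, _⟩) | ⟨h, _⟩) <;> exact h
  have hd1 : Disjoint (C ∩ {ω | g ω = -1}) (C ∩ {ω | g ω = 0}) := by
    rw [Set.disjoint_left]
    rintro ω ⟨_, h1'⟩ ⟨_, h2'⟩
    simp only [Set.mem_setOf_eq] at h1' h2'
    norm_num [h1'] at h2'
  have hd2 : Disjoint ((C ∩ {ω | g ω = -1}) ∪ (C ∩ {ω | g ω = 0})) (C ∩ {ω | g ω = 1}) := by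
    rw [Set.disjoint_left]
    rintro ω (⟨_, h1'⟩ | ⟨_, h1'⟩) ⟨_, h2'⟩ <;>
      simp only [Set.mem_setOf_eq] at h1' h2' <;> norm_num [h1'] at h2'
  conv_lhs => rw [hunion]
  rw [measure_union hd2 (hC.inter h1), measure_union hd1 (hC.inter h0)]

lemma aux_pair {X : ℤ → Ω → ℝ} (hmeas : ∀ k, Measurable (X k))
    (hstat : IsStrictlyStationary P X) (n : ℤ) (a b : ℝ) :
    P {ω | X n ω = a ∧ X (n+1) ω = b} = P {ω | X 0 ω = a ∧ X 1 ω = b} := by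
  have hT : MeasurableSet {f : Fin 2 → ℝ | f 0 = a ∧ f 1 = b} := by
    have : {f : Fin 2 → ℝ | f 0 = a ∧ f 1 = b}
        = (fun f : Fin 2 → ℝ => f 0) ⁻¹' {a} ∩ (fun f : Fin 2 → ℝ => f 1) ⁻¹' {b} := rfl
    rw [this]
    exact ((measurable_pi_apply 0) (measurableSet_singleton a)).inter
      ((measurable_pi_apply 1) (measurableSet_singleton b))
  have hmm : ∀ j : ℤ, Measurable (fun ω => fun i : Fin 2 => X (1 + j + (i : ℤ)) ω) :=
    fun j => measurable_pi_lambda _ fun i => hmeas _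
  have hmm0 : Measurable (fun ω => fun i : Fin 2 => X (1 + (i : ℤ)) ω) :=
    measurable_pi_lambda _ fun i => hmeas _
  have epre : ∀ j : ℤ, (fun ω => fun i : Fin 2 => X (1 + j + (i : ℤ)) ω) ⁻¹'
      {f : Fin 2 → ℝ | f 0 = a ∧ f 1 = b} = {ω | X (1+j) ω = a ∧ X (2+j) ω = b} := by
    intro j
    ext ω
    simp only [Set.mem_preimage, Set.mem_setOf_eq, Fin.isValue, Fin.val_zero, Fin.val_one]
    norm_num
    rw [show 1 + j + 1 = 2 + j by ring]
    tauto
  have key : ∀ j : ℤ, P {ω | X (1+j) ω = a ∧ X (2+j) ω = b}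
      = P {ω | X 1 ω = a ∧ X 2 ω = b} := by
    intro j
    have h := hstat 2 j
    have h1 := congrArg (fun μ => μ {f : Fin 2 → ℝ | f 0 = a ∧ f 1 = b}) h
    simp only [Measure.map_apply hmm0 hT, Measure.map_apply (hmm j) hT, epre j] at h1
    rw [← h1]
    have epre0 : (fun ω => fun i : Fin 2 => X (1 + (i : ℤ)) ω) ⁻¹'
        {f : Fin 2 → ℝ | f 0 = a ∧ f 1 = b} = {ω | X 1 ω = a ∧ X 2 ω = b} := by
      ext ω
      simp only [Set.mem_preimage, Set.mem_setOf_eq, Fin.isValue, Fin.val_zero, Fin.val_one]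
      norm_num
    rw [epre0]
  have h1 := key (n - 1)
  have h2 := key (-1)
  rw [show 1 + (n-1) = n by ring, show 2 + (n-1) = n + 1 by ring] at h1
  rw [show (1 : ℤ) + (-1) = 0 by ring, show (2:ℤ) + (-1) = 1 by ring] at h2
  rw [h1, ← h2]

lemma aux_marg {X : ℤ → Ω → ℝ} (hmeas : ∀ k, Measurable (X k))
    (hstat : IsStrictlyStationary P X) (n : ℤ) (a : ℝ) :
    P {ω | X n ω = a} = P {ω | X 0 ω = a} := by
  have hT : MeasurableSet {f : Fin 1 → ℝ | f 0 = a} := by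
    have : {f : Fin 1 → ℝ | f 0 = a} = (fun f : Fin 1 → ℝ => f 0) ⁻¹' {a} := rfl
    rw [this]
    exact (measurable_pi_apply 0) (measurableSet_singleton a)
  have hmm : ∀ j : ℤ, Measurable (fun ω => fun i : Fin 1 => X (1 + j + (i : ℤ)) ω) :=
    fun j => measurable_pi_lambda _ fun i => hmeas _
  have hmm0 : Measurable (fun ω => fun i : Fin 1 => X (1 + (i : ℤ)) ω) :=
    measurable_pi_lambda _ fun i => hmeas _
  have key : ∀ j : ℤ, P {ω | X (1+j) ω = a} = P {ω | X 1 ω = a} := by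
    intro j
    have h := hstat 1 j
    have h1 := congrArg (fun μ => μ {f : Fin 1 → ℝ | f 0 = a}) h
    simp only [Measure.map_apply hmm0 hT, Measure.map_apply (hmm j) hT] at h1
    have e1 : (fun ω => fun i : Fin 1 => X (1 + j + (i : ℤ)) ω) ⁻¹'
        {f : Fin 1 → ℝ | f 0 = a} = {ω | X (1+j) ω = a} := by
      ext ω
      simp only [Set.mem_preimage, Set.mem_setOf_eq, Fin.isValue, Fin.val_zero]
      norm_num
    have e0 : (fun ω => fun i : Fin 1 => X (1 + (i : ℤ)) ω) ⁻¹'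
        {f : Fin 1 → ℝ | f 0 = a} = {ω | X 1 ω = a} := by
      ext ω
      simp only [Set.mem_preimage, Set.mem_setOf_eq, Fin.isValue, Fin.val_zero]
      norm_num
    rw [e1, e0] at h1
    exact h1.symm
  have h1 := key (n - 1)
  have h2 := key (-1)
  rw [show 1 + (n-1) = n by ring] at h1
  rw [show (1 : ℤ) + (-1) = 0 by ring] at h2
  rw [h1, ← h2]

lemma aux_condexp {X : ℤ → Ω → ℝ} (hmeas : ∀ k, Measurable (X k))
    (hS : ∀ k ω, X k ω ∈ ({-1, 0, 1} : Set ℝ)) (θ c v : ℝ) (n : ℤ)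
    (hq11 : (P {ω | X n ω = 1 ∧ X (n+1) ω = 1}).toReal = v * (1-θ))
    (hq1m : (P {ω | X n ω = 1 ∧ X (n+1) ω = -1}).toReal = 0)
    (hqm1 : (P {ω | X n ω = -1 ∧ X (n+1) ω = 1}).toReal = 0)
    (hqmm : (P {ω | X n ω = -1 ∧ X (n+1) ω = -1}).toReal = v * (1-θ))
    (hq01 : (P {ω | X n ω = 0 ∧ X (n+1) ω = 1}).toReal = c)
    (hq0m : (P {ω | X n ω = 0 ∧ X (n+1) ω = -1}).toReal = c)
    (hmargp : (P {ω | X n ω = 1}).toReal = v)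
    (hmargm : (P {ω | X n ω = -1}).toReal = v) :
    (P[X (n+1) | MeasurableSpace.comap (X n) inferInstance]) =ᵐ[P]
      fun ω => (1-θ) * X n ω := by
  classical
  have hm : MeasurableSpace.comap (X n) inferInstance ≤ mΩ :=
    (hmeas n).comap_le
  have hXnm : Measurable[MeasurableSpace.comap (X n) inferInstance] (X n) :=
    Measurable.of_comap_le le_rfl
  have hg_sm : StronglyMeasurable[MeasurableSpace.comap (X n) inferInstance]
      (fun ω => (1-θ) * X n ω) := ((hXnm.const_mul (1-θ))).stronglyMeasurable
  have hint : Integrable (fun ω => (1-θ) * X n ω) P :=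
    (aux_integrable P (hmeas n) (hS n)).const_mul (1-θ)
  refine (ae_eq_condExp_of_forall_setIntegral_eq hm
    (aux_integrable P (hmeas (n+1)) (hS (n+1)))
    (fun s _ _ => hint.integrableOn)
    (fun s hs _ => ?_) hg_sm.aestronglyMeasurable).symm
  obtain ⟨B, hB, rfl⟩ := hs
  have hA : MeasurableSet (X n ⁻¹' B) := hmeas n hB
  have hinterX : ∀ a : ℝ, X n ⁻¹' B ∩ {ω | X n ω = a}
      = if a ∈ B then {ω | X n ω = a} else ∅ := by
    intro a
    split_ifs with h
    · ext ω
      simp only [Set.mem_inter_iff, Set.mem_preimage, Set.mem_setOf_eq]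
      exact ⟨fun ⟨_, ha⟩ => ha, fun ha => ⟨by rw [ha]; exact h, ha⟩⟩
    · ext ω
      simp only [Set.mem_inter_iff, Set.mem_preimage, Set.mem_setOf_eq,
        Set.mem_empty_iff_false, iff_false, not_and]
      exact fun hmem ha => h (ha ▸ hmem)
  have hinterY : ∀ b : ℝ, (P (X n ⁻¹' B ∩ {ω | X (n+1) ω = b})).toReal =
      (if (-1:ℝ) ∈ B then (P {ω | X n ω = -1 ∧ X (n+1) ω = b}).toReal else 0)
      + (if (0:ℝ) ∈ B then (P {ω | X n ω = 0 ∧ X (n+1) ω = b}).toReal else 0)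
      + (if (1:ℝ) ∈ B then (P {ω | X n ω = 1 ∧ X (n+1) ω = b}).toReal else 0) := by
    intro b
    have hCb : MeasurableSet (X n ⁻¹' B ∩ {ω | X (n+1) ω = b}) :=
      hA.inter ((hmeas (n+1)) (measurableSet_singleton b))
    have hpart := aux_partition P (hmeas n) (hS n) hCb
    have e : ∀ a : ℝ, (X n ⁻¹' B ∩ {ω | X (n+1) ω = b}) ∩ {ω | X n ω = a}
        = if a ∈ B then {ω | X n ω = a ∧ X (n+1) ω = b} else ∅ := by
      intro a
      split_ifs with h
      · ext ω
        simp only [Set.mem_inter_iff, Set.mem_preimage, Set.mem_setOf_eq]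
        exact ⟨fun ⟨⟨_, hb⟩, ha⟩ => ⟨ha, hb⟩,
          fun ⟨ha, hb⟩ => ⟨⟨by rw [ha]; exact h, hb⟩, ha⟩⟩
      · ext ω
        simp only [Set.mem_inter_iff, Set.mem_preimage, Set.mem_setOf_eq,
          Set.mem_empty_iff_false, iff_false, not_and]
        rintro ⟨hmem, _⟩ ha
        exact h (ha ▸ hmem)
    rw [hpart, e (-1), e 0, e 1, ENNReal.toReal_add, ENNReal.toReal_add]
    · split_ifs <;> simp
    · split_ifs <;> simp
    · split_ifs <;> simp
    · exact ENNReal.add_ne_top.mpr ⟨by split_ifs <;> simp, by split_ifs <;> simp⟩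
    · split_ifs <;> simp
  rw [aux_setIntegral P (hmeas (n+1)) (hS (n+1)) hA]
  have hlhs : ∫ ω in X n ⁻¹' B, (1-θ) * X n ω ∂P
      = (1-θ) * ((P (X n ⁻¹' B ∩ {ω | X n ω = 1})).toReal
          - (P (X n ⁻¹' B ∩ {ω | X n ω = -1})).toReal) := by
    rw [MeasureTheory.integral_const_mul, aux_setIntegral P (hmeas n) (hS n) hA]
  rw [hlhs, hinterX 1, hinterX (-1), hinterY 1, hinterY (-1), hq11, hq1m, hqm1, hqmm,
    hq01, hq0m]
  split_ifs <;> simp [hmargp, hmargm] <;> ring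

lemma aux_rec {X : ℤ → Ω → ℝ} (hmeas : ∀ k, Measurable (X k))
    (hS : ∀ k ω, X k ω ∈ ({-1, 0, 1} : Set ℝ))
    (θ : ℝ) (n : ℤ)
    (F' : {m : MeasurableSpace Ω // m ≤ mΩ})
    (hX0F : StronglyMeasurable[F'.1] (X 0))
    (markov1 : (P[(fun ω => Set.indicator ({1} : Set ℝ) (fun _ => (1:ℝ)) (X (n+1) ω)) | F'.1])
      =ᵐ[P] (P[(fun ω => Set.indicator ({1} : Set ℝ) (fun _ => (1:ℝ)) (X (n+1) ω)) |
        MeasurableSpace.comap (X n) inferInstance]))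
    (markovm : (P[(fun ω => Set.indicator ({-1} : Set ℝ) (fun _ => (1:ℝ)) (X (n+1) ω)) | F'.1])
      =ᵐ[P] (P[(fun ω => Set.indicator ({-1} : Set ℝ) (fun _ => (1:ℝ)) (X (n+1) ω)) |
        MeasurableSpace.comap (X n) inferInstance]))
    (hcond : (P[X (n+1) | MeasurableSpace.comap (X n) inferInstance]) =ᵐ[P]
      fun ω => (1-θ) * X n ω) :
    ∫ ω, X 0 ω * X (n+1) ω ∂P = (1-θ) * ∫ ω, X 0 ω * X n ω ∂P := by
  set e1 : Ω → ℝ := fun ω => Set.indicator ({1} : Set ℝ) (fun _ => (1:ℝ)) (X (n+1) ω) with he1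
  set em : Ω → ℝ := fun ω => Set.indicator ({-1} : Set ℝ) (fun _ => (1:ℝ)) (X (n+1) ω) with hem
  have hSmem : ∀ k ω, X k ω = -1 ∨ X k ω = 0 ∨ X k ω = 1 := by
    intro k ω
    have h := hS k ω
    simpa only [Set.mem_insert_iff, Set.mem_singleton_iff] using h
  have he1meas : Measurable e1 :=
    (measurable_const.indicator (measurableSet_singleton _)).comp (hmeas (n+1))
  have hemmeas : Measurable em :=
    (measurable_const.indicator (measurableSet_singleton _)).comp (hmeas (n+1))
  have he1int : Integrable e1 P := by
    refine (integrable_const (1:ℝ)).mono' he1meas.aestronglyMeasurable (ae_of_all _ fun ω => ?_)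
    simp only [he1, Set.indicator_apply, Real.norm_eq_abs]
    split_ifs <;> norm_num
  have hemint : Integrable em P := by
    refine (integrable_const (1:ℝ)).mono' hemmeas.aestronglyMeasurable (ae_of_all _ fun ω => ?_)
    simp only [hem, Set.indicator_apply, Real.norm_eq_abs]
    split_ifs <;> norm_num
  have hfun : X (n+1) = fun ω => e1 ω - em ω := by
    funext ω
    rcases hSmem (n+1) ω with h | h | h <;>
      simp [he1, hem, Set.indicator_apply, h] <;> norm_num
  have hXint : Integrable (X (n+1)) P := aux_integrable P (hmeas (n+1)) (hS (n+1))
  have hprodS : ∀ m : ℤ, ∀ ω, X 0 ω * X m ω ∈ ({-1, 0, 1} : Set ℝ) := by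
    intro m ω
    rcases hSmem 0 ω with h1 | h1 | h1 <;> rcases hSmem m ω with h2 | h2 | h2 <;>
      simp [h1, h2]
  have hprodint : ∀ m : ℤ, Integrable (fun ω => X 0 ω * X m ω) P := fun m =>
    aux_integrable P ((hmeas 0).mul (hmeas m)) (hprodS m)
  have hc : (P[X (n+1) | F'.1]) =ᵐ[P] fun ω => (1-θ) * X n ω := by
    calc (P[X (n+1) | F'.1]) = P[fun ω => e1 ω - em ω | F'.1] := by rw [← hfun]
      _ =ᵐ[P] P[e1 | F'.1] - P[em | F'.1] := condExp_sub he1int hemint _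
      _ =ᵐ[P] P[e1 | MeasurableSpace.comap (X n) inferInstance]
            - P[em | MeasurableSpace.comap (X n) inferInstance] :=
          markov1.sub markovm
      _ =ᵐ[P] P[fun ω => e1 ω - em ω | MeasurableSpace.comap (X n) inferInstance] :=
          (condExp_sub he1int hemint _).symm
      _ = P[X (n+1) | MeasurableSpace.comap (X n) inferInstance] := by rw [← hfun]
      _ =ᵐ[P] fun ω => (1-θ) * X n ω := hcond
  calc ∫ ω, X 0 ω * X (n+1) ω ∂P
      = ∫ ω, (P[fun ω => X 0 ω * X (n+1) ω | F'.1]) ω ∂P :=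
        by refine (integral_condExp (μ := P) (f := fun ω => X 0 ω * X (n+1) ω) ?_).symm
           exact F'.2
    _ = ∫ ω, X 0 ω * (P[X (n+1) | F'.1]) ω ∂P := by
        refine integral_congr_ae ?_
        exact condExp_mul_of_stronglyMeasurable_left hX0F (hprodint (n+1)) hXint
    _ = ∫ ω, X 0 ω * ((1-θ) * X n ω) ∂P := by
        refine integral_congr_ae ?_
        filter_upwards [hc] with ω h
        rw [h]
    _ = (1-θ) * ∫ ω, X 0 ω * X n ω ∂P := by
        rw [← MeasureTheory.integral_const_mul]
        refine integral_congr_ae (ae_of_all _ fun ω => ?_)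
        ring

end AuxLemmas

/-- Lemma 5.3(8a) of the paper: under Condition `H(ε,θ)`, for every `n ≥ 1`,
`E(X_0 X_n) = Cov(X_0, X_n) = ε(1−θ)^n > 0`. -/
theorem stmt9 {Ω : Type*} [MeasurableSpace Ω] (P : Measure Ω) [IsProbabilityMeasure P]
    (ε θ : ℝ) (hε : 0 < ε ∧ ε ≤ 1 / 9) (hθ : 0 < θ ∧ θ ≤ 1 / 9)
    (X : ℤ → Ω → ℝ) (hX : CondH P X ε θ) :
    ∀ n : ℕ, 0 < n →
      (∫ ω, X 0 ω * X (n : ℤ) ω ∂P) = ε * (1 - θ) ^ n ∧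
      (∫ ω, X 0 ω * X (n : ℤ) ω ∂P)
          - (∫ ω, X 0 ω ∂P) * (∫ ω, X (n : ℤ) ω ∂P) = ε * (1 - θ) ^ n ∧
      0 < ε * (1 - θ) ^ n := by
  obtain ⟨hstat, hmarkov, hmeas, hS, hP0, hPm, hPp, hc00, hc0m, hc0p, hcmm, hcpp,
    hcm0, hcp0, hcmp, hcpm⟩ := hX
  obtain ⟨hε0, hε9⟩ := hε
  obtain ⟨hθ0, hθ9⟩ := hθ
  have h1ε : (0:ℝ) < 1 - ε := by linarith
  have h1θ : (0:ℝ) < 1 - θ := by linarith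
  have hms : ∀ (k : ℤ) (a : ℝ), MeasurableSet {ω | X k ω = a} :=
    fun k a => hmeas k (measurableSet_singleton a)
  have hmulkey : ∀ (s t : Set Ω), MeasurableSet s → P s ≠ 0 →
      P (s ∩ t) = P s * ProbabilityTheory.cond P s t := by
    intro s t hs h0
    rw [ProbabilityTheory.cond_apply hs, ← mul_assoc,
      ENNReal.mul_inv_cancel h0 (measure_ne_top P s), one_mul]
  have hne0p : P {ω | X 0 ω = 1} ≠ 0 := by
    rw [hPp]; exact (ENNReal.ofReal_pos.mpr (by linarith)).ne'
  have hne0m : P {ω | X 0 ω = -1} ≠ 0 := by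
    rw [hPm]; exact (ENNReal.ofReal_pos.mpr (by linarith)).ne'
  have hne00 : P {ω | X 0 ω = 0} ≠ 0 := by
    rw [hP0]; exact (ENNReal.ofReal_pos.mpr h1ε).ne'
  have hsplit : ∀ (a b : ℝ),
      {ω | X 0 ω = a ∧ X 1 ω = b} = {ω | X 0 ω = a} ∩ {ω | X 1 ω = b} := fun a b => rfl
  have hnn : (0:ℝ) ≤ (θ/(1-ε)) * ε / 2 :=
    div_nonneg (mul_nonneg (div_nonneg hθ0.le h1ε.le) hε0.le) (by norm_num)
  have hq11 : (P {ω | X 0 ω = 1 ∧ X 1 ω = 1}).toReal = ε/2 * (1-θ) := by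
    rw [hsplit, hmulkey _ _ (hms 0 1) hne0p, hcpp, hPp, ENNReal.toReal_mul,
      ENNReal.toReal_ofReal (by linarith), ENNReal.toReal_ofReal (by linarith)]
  have hqmm : (P {ω | X 0 ω = -1 ∧ X 1 ω = -1}).toReal = ε/2 * (1-θ) := by
    rw [hsplit, hmulkey _ _ (hms 0 (-1)) hne0m, hcmm, hPm, ENNReal.toReal_mul,
      ENNReal.toReal_ofReal (by linarith), ENNReal.toReal_ofReal (by linarith)]
  have hq1m : (P {ω | X 0 ω = 1 ∧ X 1 ω = -1}).toReal = 0 := by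
    rw [hsplit, hmulkey _ _ (hms 0 1) hne0p, hcpm, mul_zero]
    simp
  have hqm1 : (P {ω | X 0 ω = -1 ∧ X 1 ω = 1}).toReal = 0 := by
    rw [hsplit, hmulkey _ _ (hms 0 (-1)) hne0m, hcmp, mul_zero]
    simp
  have hq01 : (P {ω | X 0 ω = 0 ∧ X 1 ω = 1}).toReal = (1-ε) * ((θ/(1-ε)) * ε / 2) := by
    rw [hsplit, hmulkey _ _ (hms 0 0) hne00, hc0p, hP0, ENNReal.toReal_mul,
      ENNReal.toReal_ofReal (by linarith), ENNReal.toReal_ofReal hnn]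
  have hq0m : (P {ω | X 0 ω = 0 ∧ X 1 ω = -1}).toReal = (1-ε) * ((θ/(1-ε)) * ε / 2) := by
    rw [hsplit, hmulkey _ _ (hms 0 0) hne00, hc0m, hP0, ENNReal.toReal_mul,
      ENNReal.toReal_ofReal (by linarith), ENNReal.toReal_ofReal hnn]
  have hmargP : ∀ n : ℤ, (P {ω | X n ω = 1}).toReal = ε/2 := by
    intro n
    rw [aux_marg P hmeas hstat n 1, hPp, ENNReal.toReal_ofReal (by linarith)]
  have hmargM : ∀ n : ℤ, (P {ω | X n ω = -1}).toReal = ε/2 := by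
    intro n
    rw [aux_marg P hmeas hstat n (-1), hPm, ENNReal.toReal_ofReal (by linarith)]
  have hcond : ∀ n : ℤ,
      (P[X (n+1) | MeasurableSpace.comap (X n) inferInstance]) =ᵐ[P]
        fun ω => (1-θ) * X n ω := by
    intro n
    exact aux_condexp P hmeas hS θ ((1-ε) * ((θ/(1-ε)) * ε / 2)) (ε/2) n
      (by rw [aux_pair P hmeas hstat n 1 1]; exact hq11)
      (by rw [aux_pair P hmeas hstat n 1 (-1)]; exact hq1m)
      (by rw [aux_pair P hmeas hstat n (-1) 1]; exact hqm1)
      (by rw [aux_pair P hmeas hstat n (-1) (-1)]; exact hqmm)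
      (by rw [aux_pair P hmeas hstat n 0 1]; exact hq01)
      (by rw [aux_pair P hmeas hstat n 0 (-1)]; exact hq0m)
      (hmargP n) (hmargM n)
  have hrec : ∀ n : ℤ, 0 ≤ n →
      ∫ ω, X 0 ω * X (n+1) ω ∂P = (1-θ) * ∫ ω, X 0 ω * X n ω ∂P := by
    intro n hn
    refine aux_rec P hmeas hS θ n
      ⟨⨆ k : {k : ℤ // k ≤ n}, MeasurableSpace.comap (X k) inferInstance,
        iSup_le fun k => (hmeas k).comap_le⟩
      ?_ (hmarkov n {1} (measurableSet_singleton 1))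
      (hmarkov n {-1} (measurableSet_singleton (-1))) (hcond n)
    exact (Measurable.of_comap_le (le_iSup
      (fun k : {k : ℤ // k ≤ n} => MeasurableSpace.comap (X (k : ℤ)) inferInstance)
      ⟨0, hn⟩)).stronglyMeasurable
  have hbase : ∫ ω, X 0 ω * X 0 ω ∂P = ε := by
    have hdec : (fun ω => X 0 ω * X 0 ω) = fun ω =>
        Set.indicator {ω | X 0 ω = 1} (fun _ => (1:ℝ)) ω
        + Set.indicator {ω | X 0 ω = -1} (fun _ => (1:ℝ)) ω := by
      funext ω
      have h := hS 0 ω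
      simp only [Set.mem_insert_iff, Set.mem_singleton_iff] at h
      rcases h with h | h | h <;> simp [Set.indicator_apply, h] <;> norm_num
    rw [hdec, integral_add ((integrable_const (1:ℝ)).indicator (hms 0 1))
        ((integrable_const (1:ℝ)).indicator (hms 0 (-1))),
      integral_indicator (hms 0 1), integral_indicator (hms 0 (-1)),
      setIntegral_const, setIntegral_const, measureReal_def, measureReal_def, hPp, hPm,
      ENNReal.toReal_ofReal (show (0:ℝ) ≤ ε/2 by linarith)]
    simp only [smul_eq_mul, mul_one]
    ring
  have hEX0 : ∫ ω, X 0 ω ∂P = 0 := by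
    have h := aux_setIntegral P (hmeas 0) (hS 0) (MeasurableSet.univ (α := Ω))
    rw [setIntegral_univ] at h
    simp only [Set.univ_inter] at h
    rw [h, hPp, hPm]
    simp
  have hg : ∀ n : ℕ, ∫ ω, X 0 ω * X (n:ℤ) ω ∂P = ε * (1-θ)^n := by
    intro n
    induction n with
    | zero => simpa using hbase
    | succ k ih =>
      have h := hrec (k:ℤ) (Int.natCast_nonneg k)
      rw [show ((k:ℤ)+1) = (((k+1 : ℕ)):ℤ) by push_cast; ring] at h
      rw [h, ih]
      ring
  intro n hn
  refine ⟨hg n, ?_, ?_⟩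
  · rw [hEX0, zero_mul, sub_zero]
    exact hg n
  · exact mul_pos hε0 (pow_pos h1θ n)
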